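/- Let S be a finite set of points in R^d, let p ∈ R^d, and for s ∈ S let n(s) denote the nearest neighbor of s within S. Then the number of points s ∈ S with d(s,p) ≤ d(s, n(s)) is bounded by the maximum possible in-degree of a vertex in a nearest neighbor graph in R^d (a constant depending only on d). -/

import Mathlib

open scoped Classical

lemma exists_net (d : ℕ) : ∃ t : Finset (EuclideanSpace ℝ (Fin d)),
    Metric.sphere (0 : EuclideanSpace ℝ (Fin d)) 1 ⊆
      ⋃ y ∈ (t : Set (EuclideanSpace ℝ (Fin d))), Metric.ball y 2⁻¹ := by
  obtain ⟨s, hsfin, hs⟩ := Metric.totallyBounded_iff.mp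
    ((isCompact_sphere (0 : EuclideanSpace ℝ (Fin d)) 1).totallyBounded) 2⁻¹ (by norm_num)
  exact ⟨hsfin.toFinset, by simpa using hs⟩

lemma key_sep {E : Type*} [NormedAddCommGroup E] [InnerProductSpace ℝ E]
    {a b : E} (ha : 0 < ‖a‖) (hb : 0 < ‖b‖)
    (h1 : ‖a‖ < ‖a - b‖) (h2 : ‖b‖ < ‖a - b‖) :
    1 < ‖‖a‖⁻¹ • a - ‖b‖⁻¹ • b‖ := by
  have hab : (inner ℝ a b : ℝ) < ‖a‖ * ‖b‖ / 2 := by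
    have e : ‖a - b‖ ^ 2 = ‖a‖ ^ 2 - 2 * inner ℝ a b + ‖b‖ ^ 2 := by
      rw [@norm_sub_sq_real]
    have h1' : ‖a‖ ^ 2 < ‖a - b‖ ^ 2 := by nlinarith [norm_nonneg (a - b)]
    have h2' : ‖b‖ ^ 2 < ‖a - b‖ ^ 2 := by nlinarith [norm_nonneg (a - b)]
    nlinarith [sq_nonneg (‖a‖ - ‖b‖), sq_nonneg (‖a‖ + ‖b‖)]
  have e2 : ‖‖a‖⁻¹ • a - ‖b‖⁻¹ • b‖ ^ 2
      = 2 - 2 * (inner ℝ a b : ℝ) / (‖a‖ * ‖b‖) := by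
    rw [@norm_sub_sq_real, norm_smul, norm_smul, real_inner_smul_left, real_inner_smul_right]
    simp only [norm_inv, norm_norm]
    rw [inv_mul_cancel₀ ha.ne', inv_mul_cancel₀ hb.ne']
    field_simp
    ring
  have hgt : 1 < ‖‖a‖⁻¹ • a - ‖b‖⁻¹ • b‖ ^ 2 := by
    rw [e2]
    have hlt : 2 * (inner ℝ a b : ℝ) / (‖a‖ * ‖b‖) < 1 := by
      rw [div_lt_one (by positivity)]
      linarith
    linarith
  nlinarith [norm_nonneg (‖a‖⁻¹ • a - ‖b‖⁻¹ • b)]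

/-- Let `S` be a finite set of points in `ℝ^d`, `p ∉ S`, and for `s ∈ S` let `nn s`
denote the nearest neighbor of `s` within `S`. Then the number of points `s ∈ S` with
`dist s p ≤ dist s (nn s)` is bounded by a constant `C d` depending only on the
dimension `d` (the maximum possible in-degree of a vertex in a nearest neighbor
graph in `ℝ^d`). -/
theorem indegree_bound_per_layer :
    ∃ C : ℕ → ℕ, ∀ (d : ℕ) (S : Finset (EuclideanSpace ℝ (Fin d))),
      2 ≤ S.card →
      ∀ p : EuclideanSpace ℝ (Fin d), p ∉ S →
      -- all pairwise distances among `S ∪ {p}` are distinct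
      (∀ a ∈ insert p S, ∀ b ∈ insert p S, ∀ u ∈ insert p S, ∀ v ∈ insert p S,
        a ≠ b → u ≠ v → dist a b = dist u v → (a = u ∧ b = v) ∨ (a = v ∧ b = u)) →
      ∀ nn : EuclideanSpace ℝ (Fin d) → EuclideanSpace ℝ (Fin d),
      (∀ s ∈ S, nn s ∈ S ∧ nn s ≠ s ∧
        ∀ t ∈ S, t ≠ s → dist s (nn s) ≤ dist s t) →
      (S.filter fun s => dist s p ≤ dist s (nn s)).card ≤ C d := by
  refine ⟨fun d => (exists_net d).choose.card, ?_⟩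
  intro d S hcard p hp hdist nn hnn
  set t := (exists_net d).choose with ht
  have hnet := (exists_net d).choose_spec
  set u : EuclideanSpace ℝ (Fin d) → EuclideanSpace ℝ (Fin d) :=
    fun s => ‖s - p‖⁻¹ • (s - p) with hu
  -- each normalized direction lies on the unit sphere
  have husphere : ∀ s ∈ S, u s ∈ Metric.sphere (0 : EuclideanSpace ℝ (Fin d)) 1 := by
    intro s hs
    have hsp : s ≠ p := fun h => hp (h ▸ hs)
    have : ‖s - p‖ ≠ 0 := by
      simp [sub_eq_zero, hsp]
    simp [hu, Metric.mem_sphere, dist_eq_norm, norm_smul, abs_of_nonneg, inv_mul_cancel₀ this]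
  -- strict inequality dist s p < dist s s' for s in the filter
  have hstrict : ∀ s ∈ S.filter (fun s => dist s p ≤ dist s (nn s)),
      ∀ s' ∈ S, s' ≠ s → dist s p < dist s s' := by
    intro s hs s' hs' hne
    rw [Finset.mem_filter] at hs
    obtain ⟨hsS, hsle⟩ := hs
    have hle : dist s p ≤ dist s s' := hsle.trans ((hnn s hsS).2.2 s' hs' hne)
    rcases lt_or_eq_of_le hle with h | h
    · exact h
    · exfalso
      have hsp : s ≠ p := fun h' => hp (h' ▸ hsS)
      have := hdist s (Finset.mem_insert_of_mem hsS) p (Finset.mem_insert_self _ _)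
        s (Finset.mem_insert_of_mem hsS) s' (Finset.mem_insert_of_mem hs')
        hsp (Ne.symm hne) h
      rcases this with ⟨_, h2⟩ | ⟨h1, _⟩
      · exact hp (h2 ▸ hs')
      · exact hne h1.symm
  -- pairwise separation of normalized directions
  have hsep : ∀ s₁ ∈ S.filter (fun s => dist s p ≤ dist s (nn s)),
      ∀ s₂ ∈ S.filter (fun s => dist s p ≤ dist s (nn s)), s₁ ≠ s₂ →
      1 < dist (u s₁) (u s₂) := by
    intro s₁ hs₁ s₂ hs₂ hne
    have hs₁S := (Finset.mem_filter.mp hs₁).1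
    have hs₂S := (Finset.mem_filter.mp hs₂).1
    have h1 : dist s₁ p < dist s₁ s₂ := hstrict s₁ hs₁ s₂ hs₂S (Ne.symm hne)
    have h2 : dist s₂ p < dist s₂ s₁ := hstrict s₂ hs₂ s₁ hs₁S hne
    have hp1 : s₁ ≠ p := fun h => hp (h ▸ hs₁S)
    have hp2 : s₂ ≠ p := fun h => hp (h ▸ hs₂S)
    have ha : (0 : ℝ) < ‖s₁ - p‖ := by
      rw [norm_pos_iff, sub_ne_zero]; exact hp1
    have hb : (0 : ℝ) < ‖s₂ - p‖ := by
      rw [norm_pos_iff, sub_ne_zero]; exact hp2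
    have hab1 : ‖s₁ - p‖ < ‖(s₁ - p) - (s₂ - p)‖ := by
      have : (s₁ - p) - (s₂ - p) = s₁ - s₂ := by abel
      rw [this]
      simpa [dist_eq_norm] using h1
    have hab2 : ‖s₂ - p‖ < ‖(s₁ - p) - (s₂ - p)‖ := by
      have e : (s₁ - p) - (s₂ - p) = s₁ - s₂ := by abel
      rw [e]
      rw [show ‖s₁ - s₂‖ = ‖s₂ - s₁‖ from norm_sub_rev _ _]
      simpa [dist_eq_norm] using h2
    have := key_sep ha hb hab1 hab2
    simpa [hu, dist_eq_norm] using this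
  -- map each point to a center of the net
  have hcover : ∀ s ∈ S, ∃ y ∈ t, dist (u s) y < 2⁻¹ := by
    intro s hs
    have := hnet (husphere s hs)
    simpa [Metric.mem_ball] using this
  classical
  have hcover' : ∀ s : EuclideanSpace ℝ (Fin d), ∃ y : EuclideanSpace ℝ (Fin d),
      s ∈ S → y ∈ t ∧ dist (u s) y < 2⁻¹ := by
    intro s
    by_cases hs : s ∈ S
    · obtain ⟨y, hy1, hy2⟩ := hcover s hs
      exact ⟨y, fun _ => ⟨hy1, hy2⟩⟩
    · exact ⟨0, fun h => absurd h hs⟩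
  choose f hf using hcover'
  apply Finset.card_le_card_of_injOn f
  · intro s hs
    exact (hf s (Finset.mem_filter.mp hs).1).1
  · intro s₁ hs₁ s₂ hs₂ heq
    by_contra hne
    have hs₁S := (Finset.mem_filter.mp hs₁).1
    have hs₂S := (Finset.mem_filter.mp hs₂).1
    have d1 : dist (u s₁) (f s₁) < 2⁻¹ := (hf s₁ hs₁S).2
    have d2 : dist (u s₂) (f s₂) < 2⁻¹ := (hf s₂ hs₂S).2
    have : dist (u s₁) (u s₂) < 1 := by
      calc dist (u s₁) (u s₂) ≤ dist (u s₁) (f s₁) + dist (f s₁) (u s₂) :=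
            dist_triangle _ _ _
        _ < 2⁻¹ + 2⁻¹ := by
            exact add_lt_add (heq ▸ d1) (by rw [heq, dist_comm]; exact d2)
        _ = 1 := by norm_num
    exact absurd this (not_lt.mpr (le_of_lt (hsep s₁ hs₁ s₂ hs₂ hne)))
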